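/- Let C be a finite set, let P_1, …, P_p ⊆ C, and let ℓ_1, …, ℓ_p, u_1, …, u_p, k be natural numbers with ℓ_i ≤ u_i for all i. For each i, let γ_i = |{ c ∈ P_i : c ∉ P_j for all j ≠ i }| be the number of candidates whose only group is P_i. If γ_i ≥ ℓ_i for every i, ∑_{i=1}^p ℓ_i ≤ k, and ∑_{i=1}^p min(γ_i, u_i) ≥ k, then there exists a subset S ⊆ C with |S| = k and ℓ_i ≤ |S ∩ P_i| ≤ u_i for every i ∈ {1,…,p}. -/

import Mathlib

/-- Discrete intermediate value for sums: we can pick `t` between `ℓ` and `m`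
pointwise with prescribed total `k`. -/
lemma exists_intermediate_sum {ι : Type*} [DecidableEq ι] (ℓ m : ι → ℕ) :
    ∀ (s : Finset ι) (k : ℕ), (∀ i ∈ s, ℓ i ≤ m i) →
      (∑ i ∈ s, ℓ i) ≤ k → k ≤ ∑ i ∈ s, m i →
      ∃ t : ι → ℕ, (∀ i ∈ s, ℓ i ≤ t i ∧ t i ≤ m i) ∧ ∑ i ∈ s, t i = k := by
  intro s
  induction s using Finset.induction_on with
  | empty =>
      intro k _ h1 h2
      simp at h1 h2
      exact ⟨fun _ => 0, by simp, by simp [h2]⟩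
  | @insert a s ha ih =>
      intro k hle h1 h2
      rw [Finset.sum_insert ha] at h1 h2
      have hla : ℓ a ≤ m a := hle a (Finset.mem_insert_self a s)
      have hℓm : ∑ i ∈ s, ℓ i ≤ ∑ i ∈ s, m i :=
        Finset.sum_le_sum fun i hi => hle i (Finset.mem_insert_of_mem hi)
      set ta := max (ℓ a) (k - ∑ i ∈ s, m i) with hta
      have hta_le : ta ≤ m a := by omega
      have hta_le_k : ta ≤ k := by omega
      obtain ⟨t, ht, hsum⟩ := ih (k - ta) (fun i hi => hle i (Finset.mem_insert_of_mem hi))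
        (by omega) (by omega)
      refine ⟨Function.update t a ta, ?_, ?_⟩
      · intro i hi
        rcases Finset.mem_insert.mp hi with rfl | hi
        · simp [hta_le]; omega
        · have : i ≠ a := fun h => ha (h ▸ hi)
          simp [Function.update_of_ne this]
          exact ht i hi
      · rw [Finset.sum_insert ha, Function.update_self]
        have : ∑ i ∈ s, Function.update t a ta i = ∑ i ∈ s, t i :=
          Finset.sum_congr rfl fun i hi =>
            Function.update_of_ne (ne_of_mem_of_not_mem hi ha) _ _
        rw [this, hsum]
        omega

/-- The single type condition ensures feasibility. -/
theorem single_type_feasible {α : Type*} [DecidableEq α] (C : Finset α) (p : ℕ)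
    (P : Fin p → Finset α) (hP : ∀ i, P i ⊆ C)
    (ℓ u : Fin p → ℕ) (k : ℕ) (hlu : ∀ i, ℓ i ≤ u i)
    (γ : Fin p → ℕ)
    (hγ : ∀ i, γ i = ((P i).filter fun c => ∀ j, j ≠ i → c ∉ P j).card)
    (h1 : ∀ i, ℓ i ≤ γ i)
    (h2 : ∑ i, ℓ i ≤ k)
    (h3 : k ≤ ∑ i, min (γ i) (u i)) :
    ∃ S ⊆ C, S.card = k ∧
      ∀ i, ℓ i ≤ (S ∩ P i).card ∧ (S ∩ P i).card ≤ u i := by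
  classical
  set T : Fin p → Finset α := fun i => (P i).filter fun c => ∀ j, j ≠ i → c ∉ P j with hT
  have hTcard : ∀ i, (T i).card = γ i := fun i => (hγ i).symm
  have hTP : ∀ i, T i ⊆ P i := fun i => Finset.filter_subset _ _
  -- choose t between ℓ and min γ u with sum k
  obtain ⟨t, ht, hsum⟩ := exists_intermediate_sum ℓ (fun i => min (γ i) (u i))
    Finset.univ k (fun i _ => le_min (h1 i) (hlu i)) h2 h3
  -- choose S i ⊆ T i with card t i
  have htγ : ∀ i, t i ≤ (T i).card := fun i => by
    rw [hTcard]; exact (ht i (Finset.mem_univ i)).2.trans (min_le_left _ _)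
  choose Sf hSf hSfcard using fun i => Finset.exists_subset_card_eq (htγ i)
  set S : Finset α := Finset.univ.biUnion Sf with hS
  have hmemT : ∀ i c, c ∈ T i → c ∈ P i ∧ ∀ j, j ≠ i → c ∉ P j := by
    intro i c hc
    rw [hT] at hc
    simpa using Finset.mem_filter.mp hc
  have hinter : ∀ i, S ∩ P i = Sf i := by
    intro i
    apply Finset.Subset.antisymm
    · intro c hc
      obtain ⟨hcS, hcP⟩ := Finset.mem_inter.mp hc
      obtain ⟨j, _, hj⟩ := Finset.mem_biUnion.mp hcS
      by_cases hji : j = i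
      · exact hji ▸ hj
      · exact absurd hcP ((hmemT j c (hSf j hj)).2 i (fun h => hji h.symm))
    · intro c hc
      exact Finset.mem_inter.mpr ⟨Finset.mem_biUnion.mpr ⟨i, Finset.mem_univ i, hc⟩,
        hTP i (hSf i hc)⟩
  refine ⟨S, ?_, ?_, ?_⟩
  · intro c hc
    obtain ⟨j, _, hj⟩ := Finset.mem_biUnion.mp hc
    exact hP j (hTP j (hSf j hj))
  · rw [hS, Finset.card_biUnion, ← hsum]
    · exact Finset.sum_congr rfl fun i _ => hSfcard i
    · intro i _ j _ hij
      rw [Function.onFun, Finset.disjoint_left]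
      intro c hci hcj
      exact (hmemT i c (hSf i hci)).2 j (fun h => hij h.symm) (hmemT j c (hSf j hcj)).1
  · intro i
    rw [hinter i, hSfcard i]
    exact ⟨(ht i (Finset.mem_univ i)).1,
      (ht i (Finset.mem_univ i)).2.trans (min_le_right _ _)⟩
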